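/- Assume lim_{N→∞} d_U(A_N, A) = 0. Then for every function f : ℝ^r → ℝ of class C¹ and every T > 0, both sup_{N ≥ 1} sup_{0 ≤ t ≤ T} sup_{p ∈ K_N} | N·(S_{N,[Nt]} f(p) − f(p)) | < ∞ and lim_{N→∞} sup_{0 ≤ t ≤ T} sup_{p ∈ K_N} | S_{N,[Nt]} f(p) − f(p) | = 0 hold. -/

import Mathlib

open scoped BigOperators NNReal
open Finset MeasureTheory

noncomputable section

/-- A Q-matrix: nonnegative off-diagonal entries, rows summing to zero. -/
def IsQMatrix {r : ℕ} (M : Matrix (Fin r) (Fin r) ℝ) : Prop :=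
  (∀ i j, i ≠ j → 0 ≤ M i j) ∧ ∀ i, ∑ j, M i j = 0

/-- A stochastic matrix: nonnegative entries, rows summing to one. -/
def IsStochastic {r : ℕ} (M : Matrix (Fin r) (Fin r) ℝ) : Prop :=
  (∀ i j, 0 ≤ M i j) ∧ ∀ i, ∑ j, M i j = 1

/-- Frobenius norm of an `r×r` real matrix. -/
def frobNorm {r : ℕ} (M : Matrix (Fin r) (Fin r) ℝ) : ℝ :=
  Real.sqrt (∑ i, ∑ j, (M i j) ^ 2)

/-- The metric `d_U(x,y) = ∫₀^∞ e^{-u} sup_{0≤t≤u} (‖x(t)−y(t)‖ ∧ 1) du` on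
matrix-valued paths. -/
def dU {r : ℕ} (x y : ℝ → Matrix (Fin r) (Fin r) ℝ) : ℝ :=
  ∫ u in Set.Ioi (0 : ℝ),
    Real.exp (-u) * sSup ((fun t => min (frobNorm (x t - y t)) 1) '' Set.Icc 0 u)

/-- Multinomial probability weight `(∑β)!/∏ β_j! · ∏ p_j^{β_j}`. -/
def multinomialWeight {r : ℕ} (p : Fin r → ℝ) (β : Fin r → ℕ) : ℝ :=
  (Nat.multinomial Finset.univ β : ℝ) * ∏ j, p j ^ β j

/-- The internal-dynamics transition operator: `SOp N P f n = S_{N} f(n/N)`, where each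
of the `n i` agents of type `i` independently moves to type `j` with probability `P i j`,
the sum running over all arrays `ξ ∈ ℤ₊^{r×r}` whose `i`-th row sums to `n i`. -/
def SOp {r : ℕ} (N : ℕ) (P : Matrix (Fin r) (Fin r) ℝ) (f : (Fin r → ℝ) → ℝ)
    (n : Fin r → ℕ) : ℝ :=
  ∑ ξ ∈ Fintype.piFinset fun i => Finset.Nat.antidiagonalTuple r (n i),
    (∏ i, multinomialWeight (P i) (ξ i)) * f fun j => ((∑ i, ξ i j : ℕ) : ℝ) / N

/-- The multinomial-sampling operator `T_N f(p) = E[f(M/N)]`, `M ~ multinomial(N,p)`. -/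
def TOp {r : ℕ} (N : ℕ) (f : (Fin r → ℝ) → ℝ) (p : Fin r → ℝ) : ℝ :=
  ∑ α ∈ Finset.Nat.antidiagonalTuple r N,
    multinomialWeight p α * f fun i => (α i : ℝ) / N

/-- One-step operator of internal dynamics followed by multinomial sampling:
`U_{N,k} f = S_{N,k}(T_N f)`. -/
def UOp {r : ℕ} (N : ℕ) (P : Matrix (Fin r) (Fin r) ℝ) (f : (Fin r → ℝ) → ℝ)
    (n : Fin r → ℕ) : ℝ :=
  SOp N P (TOp N f) n

/-- The first-order generator `G_A(t) f(p) = ∑_{i,j} pᵢ aᵢⱼ(t) ∂f/∂xⱼ(p)`,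
here taking the matrix `A(t)` as argument. -/
def GA {r : ℕ} (M : Matrix (Fin r) (Fin r) ℝ) (f : (Fin r → ℝ) → ℝ) (p : Fin r → ℝ) : ℝ :=
  ∑ i, ∑ j, p i * M i j * fderiv ℝ f p (Pi.single j 1)

/-- The Wright–Fisher generator
`G_B f(p) = (1/2) ∑_{i,j} pᵢ(δᵢⱼ − pⱼ) ∂²f/∂xᵢ∂xⱼ(p)`. -/
def GB {r : ℕ} (f : (Fin r → ℝ) → ℝ) (p : Fin r → ℝ) : ℝ :=
  (1 / 2) * ∑ i, ∑ j,
    p i * ((if i = j then (1 : ℝ) else 0) - p j) *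
      fderiv ℝ (fun x => fderiv ℝ f x (Pi.single j 1)) p (Pi.single i 1)



/-! ### Auxiliary lemmas -/

section Aux

open Finset

lemma mw_multinomial_thm {r n : ℕ} (q : Fin r → ℝ) :
    ∑ β ∈ Finset.Nat.antidiagonalTuple r n, multinomialWeight q β = (∑ j, q j) ^ n := by
  rw [← Finset.piAntidiag_univ_fin_eq_antidiagonalTuple n r,
    Finset.sum_pow_eq_sum_piAntidiag univ q n]
  rfl

lemma mw_split {r : ℕ} (p : Fin r → ℝ) (β : Fin r → ℕ) (j : Fin r) :
    multinomialWeight p β =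
      ((Nat.multinomial Finset.univ β : ℝ) * ∏ l ∈ Finset.univ.erase j, p l ^ β l) * p j ^ β j := by
  rw [multinomialWeight, ← Finset.mul_prod_erase univ (fun l => p l ^ β l) (mem_univ j)]
  ring

lemma mw_mean {r n : ℕ} (p : Fin r → ℝ) (hp : ∑ j, p j = 1) (j : Fin r) :
    ∑ β ∈ Finset.Nat.antidiagonalTuple r n, multinomialWeight p β * (β j : ℝ)
      = (n : ℝ) * p j := by
  set c : (Fin r → ℕ) → ℝ :=
    fun β => (Nat.multinomial Finset.univ β : ℝ) * ∏ l ∈ Finset.univ.erase j, p l ^ β l with hc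
  have hsum_erase : ∑ l ∈ Finset.univ.erase j, p l = 1 - p j := by
    have := Finset.add_sum_erase univ p (mem_univ j)
    rw [hp] at this; linarith
  have key : ∀ x : ℝ, (∑ β ∈ Finset.Nat.antidiagonalTuple r n, c β * x ^ β j)
      = (x + (1 - p j)) ^ n := by
    intro x
    have h1 := mw_multinomial_thm (n := n) (Function.update p j x)
    have h2 : ∑ l, Function.update p j x l = x + (1 - p j) := by
      rw [← Finset.add_sum_erase univ _ (mem_univ j), Function.update_self]
      rw [Finset.sum_congr rfl (fun l hl => by
        rw [Function.update_of_ne (Finset.ne_of_mem_erase hl)]), hsum_erase]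
    rw [h2] at h1
    rw [← h1]
    refine Finset.sum_congr rfl fun β _ => ?_
    rw [mw_split (Function.update p j x) β j, Function.update_self]
    have he : (∏ l ∈ Finset.univ.erase j, Function.update p j x l ^ β l)
        = ∏ l ∈ Finset.univ.erase j, p l ^ β l :=
      Finset.prod_congr rfl fun l hl => by
        rw [Function.update_of_ne (Finset.ne_of_mem_erase hl)]
    rw [he]
  have hF : HasDerivAt (fun x : ℝ => ∑ β ∈ Finset.Nat.antidiagonalTuple r n, c β * x ^ β j)
      (∑ β ∈ Finset.Nat.antidiagonalTuple r n, c β * ((β j : ℝ) * p j ^ (β j - 1))) (p j) :=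
    HasDerivAt.fun_sum fun β _ => (hasDerivAt_pow (β j) (p j)).const_mul (c β)
  have hG : HasDerivAt (fun x : ℝ => (x + (1 - p j)) ^ n)
      ((n : ℝ) * (p j + (1 - p j)) ^ (n - 1)) (p j) := by
    simpa using ((hasDerivAt_id (p j)).add_const (1 - p j)).fun_pow n
  have hFG : (fun x : ℝ => ∑ β ∈ Finset.Nat.antidiagonalTuple r n, c β * x ^ β j)
      = fun x : ℝ => (x + (1 - p j)) ^ n := funext key
  rw [hFG] at hF
  have heq := hF.unique hG
  have hval : (p j + (1 - p j)) ^ (n - 1) = 1 := by norm_num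
  rw [hval, mul_one] at heq
  calc ∑ β ∈ Finset.Nat.antidiagonalTuple r n, multinomialWeight p β * (β j : ℝ)
      = p j * ∑ β ∈ Finset.Nat.antidiagonalTuple r n, c β * ((β j : ℝ) * p j ^ (β j - 1)) := by
        rw [Finset.mul_sum]
        refine Finset.sum_congr rfl fun β _ => ?_
        rw [mw_split p β j]
        cases hb : β j with
        | zero => simp [hb]
        | succ m => simp only [hb, Nat.add_sub_cancel, Nat.cast_succ]; ring
    _ = p j * (n : ℝ) := by rw [heq]
    _ = (n : ℝ) * p j := mul_comm _ _

lemma mw_nonneg {r : ℕ} {p : Fin r → ℝ} (hp : ∀ j, 0 ≤ p j) (β : Fin r → ℕ) :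
    0 ≤ multinomialWeight p β :=
  mul_nonneg (Nat.cast_nonneg _) (Finset.prod_nonneg fun j _ => pow_nonneg (hp j) _)

lemma w_sum_one {r : ℕ} (P : Matrix (Fin r) (Fin r) ℝ) (hrow : ∀ l, ∑ j, P l j = 1)
    (n : Fin r → ℕ) :
    ∑ ξ ∈ Fintype.piFinset (fun i => Finset.Nat.antidiagonalTuple r (n i)),
      ∏ l, multinomialWeight (P l) (ξ l) = 1 := by
  rw [← Finset.prod_univ_sum]
  simp [mw_multinomial_thm, hrow]

lemma exp_coord {r : ℕ} (P : Matrix (Fin r) (Fin r) ℝ) (hrow : ∀ l, ∑ j, P l j = 1)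
    (n : Fin r → ℕ) (i k : Fin r) :
    ∑ ξ ∈ Fintype.piFinset (fun i => Finset.Nat.antidiagonalTuple r (n i)),
      (∏ l, multinomialWeight (P l) (ξ l)) * (ξ i k : ℝ) = (n i : ℝ) * P i k := by
  set g : Fin r → (Fin r → ℕ) → ℝ :=
    Function.update (fun l β => multinomialWeight (P l) β)
      i (fun β => multinomialWeight (P i) β * (β k : ℝ)) with hg
  have hgi : g i = fun β => multinomialWeight (P i) β * (β k : ℝ) := Function.update_self _ _ _
  have hgne : ∀ l, l ≠ i → g l = fun β => multinomialWeight (P l) β := fun l hl =>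
    Function.update_of_ne hl _ _
  have key := Finset.prod_univ_sum (fun l => Finset.Nat.antidiagonalTuple r (n l))
    (fun l β => g l β)
  have hL : (∏ l, ∑ β ∈ Finset.Nat.antidiagonalTuple r (n l), g l β) = (n i : ℝ) * P i k := by
    rw [← Finset.mul_prod_erase univ _ (mem_univ i), hgi, mw_mean (P i) (hrow i) k]
    have : ∀ l ∈ Finset.univ.erase i,
        (∑ β ∈ Finset.Nat.antidiagonalTuple r (n l), g l β) = 1 := by
      intro l hl
      rw [hgne l (Finset.ne_of_mem_erase hl), mw_multinomial_thm, hrow l, one_pow]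
    rw [Finset.prod_congr rfl this, Finset.prod_const_one, mul_one]
  have hR : ∀ ξ : Fin r → (Fin r → ℕ),
      (∏ l, g l (ξ l)) = (∏ l, multinomialWeight (P l) (ξ l)) * (ξ i k : ℝ) := by
    intro ξ
    rw [← Finset.mul_prod_erase univ (fun l => g l (ξ l)) (mem_univ i), hgi]
    rw [← Finset.mul_prod_erase univ (fun l => multinomialWeight (P l) (ξ l)) (mem_univ i)]
    have : ∀ l ∈ Finset.univ.erase i, g l (ξ l) = multinomialWeight (P l) (ξ l) := fun l hl => by
      rw [hgne l (Finset.ne_of_mem_erase hl)]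
    rw [Finset.prod_congr rfl this]
    ring
  rw [← Finset.sum_congr rfl (fun ξ _ => hR ξ), ← key, hL]

lemma sop_est {r : ℕ} (N : ℕ) (hN : 1 ≤ N) (P : Matrix (Fin r) (Fin r) ℝ)
    (hP : IsStochastic P) (f : (Fin r → ℝ) → ℝ) (L : ℝ) (hL : 0 ≤ L)
    (hLip : ∀ x ∈ Metric.closedBall (0 : Fin r → ℝ) 1, ∀ y ∈ Metric.closedBall (0 : Fin r → ℝ) 1,
      |f x - f y| ≤ L * ‖x - y‖)
    (n : Fin r → ℕ) (hn : ∑ i, n i = N) :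
    |SOp N P f n - f (fun i => (n i : ℝ) / N)| ≤ 2 * L / N * ∑ i, (n i : ℝ) * (1 - P i i) := by
  have hNpos : (0 : ℝ) < N := by exact_mod_cast hN
  set D := Fintype.piFinset (fun i => Finset.Nat.antidiagonalTuple r (n i)) with hD
  set w : (Fin r → Fin r → ℕ) → ℝ := fun ξ => ∏ l, multinomialWeight (P l) (ξ l) with hw
  set p₀ : Fin r → ℝ := fun i => (n i : ℝ) / N with hp₀
  set ζ : (Fin r → Fin r → ℕ) → (Fin r → ℝ) := fun ξ j => ((∑ i, ξ i j : ℕ) : ℝ) / N with hζ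
  have hwnn : ∀ ξ, 0 ≤ w ξ := fun ξ =>
    Finset.prod_nonneg fun l _ => mw_nonneg (fun j => hP.1 l j) (ξ l)
  have hw1 : ∑ ξ ∈ D, w ξ = 1 := w_sum_one P hP.2 n
  have hmem : ∀ ξ ∈ D, ∀ i, ∑ j, ξ i j = n i := by
    intro ξ hξ i
    exact Finset.Nat.mem_antidiagonalTuple.mp (Fintype.mem_piFinset.mp hξ i)
  have hcoordle : ∀ ξ ∈ D, ∀ i j, ξ i j ≤ n i := by
    intro ξ hξ i j
    calc ξ i j ≤ ∑ j', ξ i j' := Finset.single_le_sum (fun j' _ => Nat.zero_le _) (mem_univ j)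
      _ = n i := hmem ξ hξ i
  have hcolle : ∀ ξ ∈ D, ∀ j, (∑ i, ξ i j) ≤ N := by
    intro ξ hξ j
    calc ∑ i, ξ i j ≤ ∑ i, n i := Finset.sum_le_sum fun i _ => hcoordle ξ hξ i j
      _ = N := hn
  have hball : ∀ x : Fin r → ℝ, (∀ j, 0 ≤ x j ∧ x j ≤ 1) →
      x ∈ Metric.closedBall (0 : Fin r → ℝ) 1 := by
    intro x hx
    rw [Metric.mem_closedBall, dist_zero_right]
    rw [pi_norm_le_iff_of_nonneg zero_le_one]
    intro j
    rw [Real.norm_eq_abs, abs_le]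
    exact ⟨by linarith [(hx j).1], (hx j).2⟩
  have hp₀ball : p₀ ∈ Metric.closedBall (0 : Fin r → ℝ) 1 := by
    refine hball _ fun j => ⟨by positivity, ?_⟩
    rw [div_le_one hNpos]
    have hnle : n j ≤ N := hn ▸ Finset.single_le_sum (fun i _ => Nat.zero_le _) (mem_univ j)
    exact_mod_cast hnle
  have hζball : ∀ ξ ∈ D, ζ ξ ∈ Metric.closedBall (0 : Fin r → ℝ) 1 := by
    intro ξ hξ
    refine hball _ fun j => ⟨by positivity, ?_⟩
    rw [div_le_one hNpos]
    exact_mod_cast hcolle ξ hξ j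
  have hnorm_le : ∀ x : Fin r → ℝ, ‖x‖ ≤ ∑ j, |x j| := by
    intro x
    have hS : 0 ≤ ∑ j, |x j| := Finset.sum_nonneg fun j _ => abs_nonneg _
    rw [pi_norm_le_iff_of_nonneg hS]
    intro j
    rw [Real.norm_eq_abs]
    exact Finset.single_le_sum (f := fun j' => |x j'|) (fun j' _ => abs_nonneg _) (mem_univ j)
  have hkey : ∀ ξ ∈ D, |f (ζ ξ) - f p₀| ≤
      L / N * (2 * ∑ i, ((n i : ℝ) - ξ i i)) := by
    intro ξ hξ
    have h1 : |f (ζ ξ) - f p₀| ≤ L * ‖ζ ξ - p₀‖ := hLip _ (hζball ξ hξ) _ hp₀ball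
    have h2 : ‖ζ ξ - p₀‖ ≤ ∑ j, |ζ ξ j - p₀ j| := by
      calc ‖ζ ξ - p₀‖ ≤ ∑ j, |(ζ ξ - p₀) j| := hnorm_le _
        _ = ∑ j, |ζ ξ j - p₀ j| := by rfl
    have h3 : ∀ j, |ζ ξ j - p₀ j| =
        |(∑ i, (ξ i j : ℝ)) - (n j : ℝ)| / N := by
      intro j
      rw [hζ, hp₀]
      push_cast
      rw [div_sub_div_same, abs_div, abs_of_pos hNpos]
    have h4 : ∀ j, |(∑ i, (ξ i j : ℝ)) - (n j : ℝ)| ≤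
        ((n j : ℝ) - ξ j j) + ∑ i ∈ Finset.univ.erase j, (ξ i j : ℝ) := by
      intro j
      have hsplit : (∑ i, (ξ i j : ℝ)) = (ξ j j : ℝ) + ∑ i ∈ Finset.univ.erase j, (ξ i j : ℝ) :=
        (Finset.add_sum_erase univ (fun i => (ξ i j : ℝ)) (mem_univ j)).symm
      have hSnn : 0 ≤ ∑ i ∈ Finset.univ.erase j, (ξ i j : ℝ) :=
        Finset.sum_nonneg fun i _ => Nat.cast_nonneg _
      have hle : (ξ j j : ℝ) ≤ (n j : ℝ) := Nat.cast_le.mpr (hcoordle ξ hξ j j)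
      rw [hsplit, abs_le]
      constructor <;> linarith
    have h5 : (∑ j, (((n j : ℝ) - ξ j j) + ∑ i ∈ Finset.univ.erase j, (ξ i j : ℝ)))
        = 2 * ∑ i, ((n i : ℝ) - ξ i i) := by
      rw [Finset.sum_add_distrib]
      have hsw : (∑ j, ∑ i ∈ Finset.univ.erase j, (ξ i j : ℝ))
          = ∑ i, ((n i : ℝ) - (ξ i i : ℝ)) := by
        have e1 : ∀ j : Fin r, (∑ i ∈ Finset.univ.erase j, (ξ i j : ℝ))
            = ∑ i, (if i = j then 0 else (ξ i j : ℝ)) := by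
          intro j
          rw [← Finset.add_sum_erase univ _ (mem_univ j), if_pos rfl, zero_add]
          exact Finset.sum_congr rfl fun i hi => (if_neg (Finset.ne_of_mem_erase hi)).symm
        rw [Finset.sum_congr rfl fun j _ => e1 j, Finset.sum_comm]
        refine Finset.sum_congr rfl fun i _ => ?_
        have e2 : (∑ j, (if i = j then 0 else (ξ i j : ℝ)))
            = ∑ j ∈ Finset.univ.erase i, (ξ i j : ℝ) := by
          rw [← Finset.add_sum_erase univ _ (mem_univ i), if_pos rfl, zero_add]
          exact Finset.sum_congr rfl fun j hj =>
            if_neg (fun h => (Finset.ne_of_mem_erase hj) h.symm)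
        have e3 : (ξ i i : ℝ) + ∑ j ∈ Finset.univ.erase i, (ξ i j : ℝ) = (n i : ℝ) := by
          rw [Finset.add_sum_erase univ (fun j => (ξ i j : ℝ)) (mem_univ i)]
          exact_mod_cast congrArg Nat.cast (hmem ξ hξ i)
        rw [e2]
        linarith
      rw [hsw]
      ring
    calc |f (ζ ξ) - f p₀| ≤ L * ‖ζ ξ - p₀‖ := h1
      _ ≤ L * ∑ j, |ζ ξ j - p₀ j| := by
          exact mul_le_mul_of_nonneg_left h2 hL
      _ = L / N * ∑ j, |(∑ i, (ξ i j : ℝ)) - (n j : ℝ)| := by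
          rw [Finset.sum_congr rfl fun j _ => h3 j, ← Finset.sum_div]
          ring
      _ ≤ L / N * ∑ j, (((n j : ℝ) - ξ j j) + ∑ i ∈ Finset.univ.erase j, (ξ i j : ℝ)) := by
          refine mul_le_mul_of_nonneg_left (Finset.sum_le_sum fun j _ => h4 j) (by positivity)
      _ = L / N * (2 * ∑ i, ((n i : ℝ) - ξ i i)) := by rw [h5]
  have hdiff : SOp N P f n - f p₀ = ∑ ξ ∈ D, w ξ * (f (ζ ξ) - f p₀) := by
    simp only [mul_sub, Finset.sum_sub_distrib, ← Finset.sum_mul, hw1, one_mul]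
    rfl
  have hexp : ∑ ξ ∈ D, w ξ * (∑ i, ((n i : ℝ) - ξ i i)) = ∑ i, (n i : ℝ) * (1 - P i i) := by
    simp only [Finset.mul_sum]
    rw [Finset.sum_comm]
    refine Finset.sum_congr rfl fun i _ => ?_
    simp only [mul_sub]
    rw [Finset.sum_sub_distrib, ← Finset.sum_mul, hw1, exp_coord P hP.2 n i i]
    ring
  rw [hdiff]
  calc |∑ ξ ∈ D, w ξ * (f (ζ ξ) - f p₀)| ≤ ∑ ξ ∈ D, |w ξ * (f (ζ ξ) - f p₀)| :=
        Finset.abs_sum_le_sum_abs _ _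
    _ = ∑ ξ ∈ D, w ξ * |f (ζ ξ) - f p₀| := by
        refine Finset.sum_congr rfl fun ξ _ => ?_
        rw [abs_mul, abs_of_nonneg (hwnn ξ)]
    _ ≤ ∑ ξ ∈ D, w ξ * (L / N * (2 * ∑ i, ((n i : ℝ) - ξ i i))) :=
        Finset.sum_le_sum fun ξ hξ => mul_le_mul_of_nonneg_left (hkey ξ hξ) (hwnn ξ)
    _ = 2 * L / N * ∑ ξ ∈ D, w ξ * (∑ i, ((n i : ℝ) - ξ i i)) := by
        rw [Finset.mul_sum]
        exact Finset.sum_congr rfl fun ξ _ => by ring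
    _ = 2 * L / N * ∑ i, (n i : ℝ) * (1 - P i i) := by rw [hexp]

lemma frobNorm_nonneg {r : ℕ} (M : Matrix (Fin r) (Fin r) ℝ) : 0 ≤ frobNorm M :=
  Real.sqrt_nonneg _

lemma entry_le_frob {r : ℕ} (M : Matrix (Fin r) (Fin r) ℝ) (i j : Fin r) :
    |M i j| ≤ frobNorm M := by
  rw [frobNorm, ← Real.sqrt_sq_eq_abs]
  apply Real.sqrt_le_sqrt
  calc M i j ^ 2 ≤ ∑ j', M i j' ^ 2 :=
        Finset.single_le_sum (f := fun j' => M i j' ^ 2) (fun _ _ => sq_nonneg _) (mem_univ j)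
    _ ≤ ∑ i', ∑ j', M i' j' ^ 2 :=
        Finset.single_le_sum (f := fun i' => ∑ j', M i' j' ^ 2)
          (fun _ _ => Finset.sum_nonneg fun _ _ => sq_nonneg _) (mem_univ i)

lemma dU_ge {r : ℕ} (x y : ℝ → Matrix (Fin r) (Fin r) ℝ) (T' : ℝ) (s : ℝ)
    (hs : s ∈ Set.Icc (0 : ℝ) T') :
    min (frobNorm (x s - y s)) 1 * (Real.exp (-T') - Real.exp (-(T' + 1))) ≤ dU x y := by
  obtain ⟨hs0, hsT⟩ := hs
  have hT0 : (0 : ℝ) ≤ T' := le_trans hs0 hsT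
  set φ : ℝ → ℝ := fun t => min (frobNorm (x t - y t)) 1 with hφ
  have hφ01 : ∀ t, 0 ≤ φ t ∧ φ t ≤ 1 := fun t =>
    ⟨le_min (frobNorm_nonneg _) zero_le_one, min_le_right _ _⟩
  set g : ℝ → ℝ := fun u => sSup (φ '' Set.Icc 0 u) with hg
  have hbdd : ∀ u : ℝ, BddAbove (φ '' Set.Icc 0 u) := fun u =>
    ⟨1, by rintro v ⟨t, _, rfl⟩; exact (hφ01 t).2⟩
  have hg_le_one : ∀ u, g u ≤ 1 := fun u =>
    Real.sSup_le (by rintro v ⟨t, _, rfl⟩; exact (hφ01 t).2) zero_le_one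
  have hg_nonneg : ∀ u, 0 ≤ g u := fun u =>
    Real.sSup_nonneg (by rintro v ⟨t, _, rfl⟩; exact (hφ01 t).1)
  have hgmono : Monotone g := by
    intro u v huv
    rcases le_or_gt 0 u with hu | hu
    · exact csSup_le_csSup (hbdd v) (Set.Nonempty.image _ ⟨0, Set.left_mem_Icc.mpr hu⟩)
        (Set.image_mono (Set.Icc_subset_Icc_right huv))
    · have he : Set.Icc (0 : ℝ) u = ∅ := Set.Icc_eq_empty (by linarith)
      have : g u = 0 := by rw [hg]; simp only [he, Set.image_empty, Real.sSup_empty]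
      rw [this]; exact hg_nonneg v
  have hmeas : Measurable g := hgmono.measurable
  have hintegrand : IntegrableOn (fun u => Real.exp (-u) * g u) (Set.Ioi (0 : ℝ)) := by
    have hmaj : IntegrableOn (fun u => Real.exp (-u)) (Set.Ioi (0 : ℝ)) := by
      have := exp_neg_integrableOn_Ioi 0 (one_pos)
      simpa using this
    refine Integrable.mono' hmaj ?_ ?_
    · exact ((Real.measurable_exp.comp measurable_neg).mul hmeas).aestronglyMeasurable
    · refine Filter.Eventually.of_forall fun u => ?_
      rw [Real.norm_eq_abs, abs_mul, abs_of_pos (Real.exp_pos _), abs_of_nonneg (hg_nonneg u)]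
      nth_rewrite 2 [← mul_one (Real.exp (-u))]
      exact mul_le_mul_of_nonneg_left (hg_le_one u) (Real.exp_pos _).le
  set m := φ s with hm
  have hm_le_g : ∀ u ∈ Set.Ioc T' (T' + 1), m ≤ g u := fun u hu =>
    le_csSup (hbdd u) ⟨s, ⟨hs0, le_trans hsT (le_of_lt hu.1)⟩, rfl⟩
  have hsub : Set.Ioc T' (T' + 1) ⊆ Set.Ioi (0 : ℝ) := fun u hu => lt_of_le_of_lt hT0 hu.1
  have step0 : ∫ u in Set.Ioc T' (T' + 1), Real.exp (-u) * m
      = (Real.exp (-T') - Real.exp (-(T' + 1))) * m := by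
    rw [MeasureTheory.integral_mul_const]
    congr 1
    rw [← intervalIntegral.integral_of_le (by linarith : T' ≤ T' + 1)]
    rw [intervalIntegral.integral_comp_neg (fun x => Real.exp x)]
    rw [integral_exp]
  have step1 : ∫ u in Set.Ioc T' (T' + 1), Real.exp (-u) * m
      ≤ ∫ u in Set.Ioc T' (T' + 1), Real.exp (-u) * g u := by
    refine MeasureTheory.setIntegral_mono_on ?_ (hintegrand.mono_set hsub) measurableSet_Ioc ?_
    · exact ((Real.continuous_exp.comp continuous_neg).mul continuous_const).integrableOn_Ioc
    · exact fun u hu => mul_le_mul_of_nonneg_left (hm_le_g u hu) (Real.exp_pos _).le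
  have step2 : ∫ u in Set.Ioc T' (T' + 1), Real.exp (-u) * g u ≤ dU x y := by
    refine MeasureTheory.setIntegral_mono_set hintegrand ?_ (HasSubset.Subset.eventuallyLE hsub)
    exact Filter.Eventually.of_forall fun u => mul_nonneg (Real.exp_pos _).le (hg_nonneg u)
  have := le_trans (le_of_eq step0.symm) (le_trans step1 step2)
  calc min (frobNorm (x s - y s)) 1 * (Real.exp (-T') - Real.exp (-(T' + 1)))
      = (Real.exp (-T') - Real.exp (-(T' + 1))) * m := by rw [hm, hφ]; ring
    _ ≤ dU x y := this

/-- Entrywise ℓ¹ norm of a matrix. -/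
def l1 {r : ℕ} (M : Matrix (Fin r) (Fin r) ℝ) : ℝ := ∑ i, ∑ j, |M i j|

lemma l1_nonneg {r : ℕ} (M : Matrix (Fin r) (Fin r) ℝ) : 0 ≤ l1 M :=
  Finset.sum_nonneg fun _ _ => Finset.sum_nonneg fun _ _ => abs_nonneg _

lemma l1_le_frob {r : ℕ} (M : Matrix (Fin r) (Fin r) ℝ) :
    l1 M ≤ (r : ℝ) ^ 2 * frobNorm M := by
  calc l1 M ≤ ∑ _i : Fin r, ∑ _j : Fin r, frobNorm M :=
        Finset.sum_le_sum fun i _ => Finset.sum_le_sum fun j _ => entry_le_frob M i j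
    _ = (r : ℝ) ^ 2 * frobNorm M := by
        simp [Finset.sum_const, Finset.card_univ]
        ring

lemma l1_sub_le {r : ℕ} (X Y : Matrix (Fin r) (Fin r) ℝ) : l1 X ≤ l1 (X - Y) + l1 Y := by
  rw [l1, l1, l1, ← Finset.sum_add_distrib]
  refine Finset.sum_le_sum fun i _ => ?_
  rw [← Finset.sum_add_distrib]
  refine Finset.sum_le_sum fun j _ => ?_
  rw [Matrix.sub_apply]
  calc |X i j| = |(X i j - Y i j) + Y i j| := by ring_nf
    _ ≤ |X i j - Y i j| + |Y i j| := abs_add_le _ _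

lemma diag_le_l1 {r : ℕ} (M : Matrix (Fin r) (Fin r) ℝ) : ∑ i, |M i i| ≤ l1 M :=
  Finset.sum_le_sum fun i _ =>
    Finset.single_le_sum (f := fun j => |M i j|) (fun _ _ => abs_nonneg _) (mem_univ i)

lemma exists_lip {r : ℕ} (f : (Fin r → ℝ) → ℝ) (hf : ContDiff ℝ 1 f) :
    ∃ L : ℝ, 0 ≤ L ∧ ∀ x ∈ Metric.closedBall (0 : Fin r → ℝ) 1,
      ∀ y ∈ Metric.closedBall (0 : Fin r → ℝ) 1, |f x - f y| ≤ L * ‖x - y‖ := by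
  obtain ⟨C, hC⟩ := (isCompact_closedBall (0 : Fin r → ℝ) 1).exists_bound_of_continuousOn
    ((hf.continuous_fderiv one_ne_zero).continuousOn)
  refine ⟨max C 0, le_max_right _ _, fun x hx y hy => ?_⟩
  have : ‖f x - f y‖ ≤ max C 0 * ‖x - y‖ :=
    (convex_closedBall (0 : Fin r → ℝ) 1).norm_image_sub_le_of_norm_fderiv_le
      (fun z _ => (hf.differentiable one_ne_zero).differentiableAt)
      (fun z hz => le_trans (hC z hz) (le_max_left _ _)) hy hx
  simpa [Real.norm_eq_abs] using this

end Aux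

/-- For every C¹ function `f` and `T > 0`: boundedness
`sup_(N≥1) sup_(0≤t≤T) sup_(p ∈ K_N) |N(S_(N,[Nt])f(p) − f(p))| < ∞` and convergence
`lim_N sup_(0≤t≤T) sup_(p ∈ K_N) |S_(N,[Nt])f(p) − f(p)| = 0`. -/
theorem internal_dynamics_increment_bound_C1
    (r : ℕ) (hr : 2 ≤ r)
    (A : ℕ → ℝ → Matrix (Fin r) (Fin r) ℝ)
    (Alim : ℝ → Matrix (Fin r) (Fin r) ℝ)
    (hQ : ∀ N : ℕ, 1 ≤ N → ∀ t : ℝ, 0 ≤ t → IsQMatrix (A N t))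
    (hstepwise : ∀ N : ℕ, 1 ≤ N → ∀ k : ℕ, ∀ t : ℝ,
      (k : ℝ) / N ≤ t → t < ((k : ℝ) + 1) / N → A N t = A N ((k : ℝ) / N))
    (hQlim : ∀ t : ℝ, 0 ≤ t → IsQMatrix (Alim t))
    (hcadlag_right : ∀ t : ℝ, 0 ≤ t → ContinuousWithinAt Alim (Set.Ici t) t)
    (hcadlag_left : ∀ t : ℝ, 0 < t →
      ∃ L, Filter.Tendsto Alim (nhdsWithin t (Set.Iio t)) (nhds L))
    (hstoch : ∀ N : ℕ, 1 ≤ N → ∀ k : ℕ,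
      IsStochastic (1 + ((N : ℝ))⁻¹ • A N ((k : ℝ) / N)))
    (hconv : Filter.Tendsto (fun N => dU (A N) Alim) Filter.atTop (nhds 0))
    (f : (Fin r → ℝ) → ℝ) (hf : ContDiff ℝ 1 f) (T : ℝ) (hT : 0 < T) :
    (∃ C : ℝ, ∀ N : ℕ, 1 ≤ N → ∀ t : ℝ, 0 ≤ t → t ≤ T →
      ∀ n : Fin r → ℕ, ∑ i, n i = N →
        |(N : ℝ) * (SOp N (1 + ((N : ℝ))⁻¹ • A N ((⌊(N : ℝ) * t⌋₊ : ℝ) / N)) f n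
              - f fun i => (n i : ℝ) / N)| ≤ C) ∧
    (∀ ε > 0, ∃ N₀ : ℕ, ∀ N : ℕ, N₀ ≤ N → 1 ≤ N → ∀ t : ℝ, 0 ≤ t → t ≤ T →
      ∀ n : Fin r → ℕ, ∑ i, n i = N →
        |SOp N (1 + ((N : ℝ))⁻¹ • A N ((⌊(N : ℝ) * t⌋₊ : ℝ) / N)) f n
              - f (fun i => (n i : ℝ) / N)| < ε) := by
  obtain ⟨L, hL0, hLip⟩ := exists_lip f hf
  have hc : 0 < Real.exp (-T) - Real.exp (-(T + 1)) := by
    have h := Real.exp_lt_exp.mpr (show -(T + 1) < -T by linarith)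
    linarith
  obtain ⟨N₁', hN₁'⟩ := (Metric.tendsto_atTop.mp hconv)
    ((Real.exp (-T) - Real.exp (-(T + 1))) / 2) (by linarith)
  set N₂ := max N₁' 1 with hN₂def
  have hN₂1 : 1 ≤ N₂ := le_max_right _ _
  have hclose : ∀ N, N₂ ≤ N → ∀ s ∈ Set.Icc (0 : ℝ) T, frobNorm (A N s - Alim s) ≤ 1 := by
    intro N hN s hsm
    by_contra hcon
    push_neg at hcon
    have h1 : min (frobNorm (A N s - Alim s)) 1 = 1 := min_eq_right hcon.le
    have h2 := dU_ge (A N) Alim T s hsm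
    rw [h1, one_mul] at h2
    have h3 := hN₁' N (le_trans (le_max_left _ _) hN)
    rw [Real.dist_eq, sub_zero] at h3
    have h4 : dU (A N) Alim ≤ |dU (A N) Alim| := le_abs_self _
    linarith
  have hpc : ∀ N : ℕ, 1 ≤ N → ∀ s : ℝ, 0 ≤ s →
      A N s = A N ((⌊(N : ℝ) * s⌋₊ : ℝ) / N) := by
    intro N hN s hs
    have hNpos : (0 : ℝ) < N := by exact_mod_cast hN
    refine hstepwise N hN ⌊(N : ℝ) * s⌋₊ s ?_ ?_
    · rw [div_le_iff₀ hNpos, mul_comm]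
      exact Nat.floor_le (by positivity)
    · rw [lt_div_iff₀ hNpos, mul_comm]
      exact_mod_cast Nat.lt_floor_add_one ((N : ℝ) * s)
  have hK₂ne : (Finset.range (⌊(N₂ : ℝ) * T⌋₊ + 1)).Nonempty :=
    ⟨0, Finset.mem_range.mpr (Nat.succ_pos _)⟩
  set B₂ := (Finset.range (⌊(N₂ : ℝ) * T⌋₊ + 1)).sup' hK₂ne
    (fun k => l1 (A N₂ ((k : ℝ) / N₂))) with hB₂def
  have hAN₂ : ∀ s ∈ Set.Icc (0 : ℝ) T, l1 (A N₂ s) ≤ B₂ := by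
    intro s hsm
    rw [hpc N₂ hN₂1 s hsm.1]
    refine Finset.le_sup' (f := fun k : ℕ => l1 (A N₂ ((k : ℝ) / N₂))) (Finset.mem_range.mpr ?_)
    have : ⌊(N₂ : ℝ) * s⌋₊ ≤ ⌊(N₂ : ℝ) * T⌋₊ :=
      Nat.floor_le_floor (mul_le_mul_of_nonneg_left hsm.2 (Nat.cast_nonneg _))
    omega
  have hAlim_bd : ∀ s ∈ Set.Icc (0 : ℝ) T, l1 (Alim s) ≤ B₂ + (r : ℝ) ^ 2 := by
    intro s hsm
    have h1 : l1 (Alim s) ≤ l1 (Alim s - A N₂ s) + l1 (A N₂ s) := l1_sub_le _ _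
    have h2 : l1 (Alim s - A N₂ s) ≤ (r : ℝ) ^ 2 * frobNorm (Alim s - A N₂ s) := l1_le_frob _
    have h3 : frobNorm (Alim s - A N₂ s) = frobNorm (A N₂ s - Alim s) := by
      rw [frobNorm, frobNorm]
      congr 1
      refine Finset.sum_congr rfl fun i _ => Finset.sum_congr rfl fun j _ => ?_
      rw [Matrix.sub_apply, Matrix.sub_apply]
      ring
    have h4 := hclose N₂ le_rfl s hsm
    have h5 : (0 : ℝ) ≤ (r : ℝ) ^ 2 := by positivity
    nlinarith [hAN₂ s hsm]
  have hBig : ∀ N, N₂ ≤ N → ∀ s ∈ Set.Icc (0 : ℝ) T,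
      l1 (A N s) ≤ B₂ + 2 * (r : ℝ) ^ 2 := by
    intro N hN s hsm
    have h1 : l1 (A N s) ≤ l1 (A N s - Alim s) + l1 (Alim s) := l1_sub_le _ _
    have h2 : l1 (A N s - Alim s) ≤ (r : ℝ) ^ 2 * frobNorm (A N s - Alim s) := l1_le_frob _
    have h4 := hclose N hN s hsm
    have h5 : (0 : ℝ) ≤ (r : ℝ) ^ 2 := by positivity
    nlinarith [hAlim_bd s hsm]
  have hQne : ((Finset.Icc 1 N₂) ×ˢ (Finset.range (⌊(N₂ : ℝ) * T⌋₊ + 1))).Nonempty :=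
    ⟨(1, 0), Finset.mem_product.mpr
      ⟨Finset.mem_Icc.mpr ⟨le_rfl, hN₂1⟩, Finset.mem_range.mpr (Nat.succ_pos _)⟩⟩
  set B₁ := ((Finset.Icc 1 N₂) ×ˢ (Finset.range (⌊(N₂ : ℝ) * T⌋₊ + 1))).sup' hQne
    (fun q => l1 (A q.1 ((q.2 : ℝ) / q.1))) with hB₁def
  have hSmall : ∀ N, 1 ≤ N → N ≤ N₂ → ∀ s ∈ Set.Icc (0 : ℝ) T, l1 (A N s) ≤ B₁ := by
    intro N h1 h2 s hsm
    rw [hpc N h1 s hsm.1]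
    refine Finset.le_sup' (f := fun q : ℕ × ℕ => l1 (A q.1 ((q.2 : ℝ) / q.1)))
      (b := (N, ⌊(N : ℝ) * s⌋₊))
      (Finset.mem_product.mpr ⟨Finset.mem_Icc.mpr ⟨h1, h2⟩, Finset.mem_range.mpr ?_⟩)
    have hNle : (N : ℝ) * s ≤ (N₂ : ℝ) * T := by
      have : (N : ℝ) ≤ (N₂ : ℝ) := by exact_mod_cast h2
      nlinarith [hsm.1, hsm.2]
    have : ⌊(N : ℝ) * s⌋₊ ≤ ⌊(N₂ : ℝ) * T⌋₊ := Nat.floor_le_floor hNle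
    omega
  set B := max B₁ (B₂ + 2 * (r : ℝ) ^ 2) with hBdef
  have hB : ∀ N, 1 ≤ N → ∀ s ∈ Set.Icc (0 : ℝ) T, l1 (A N s) ≤ B := by
    intro N h1 s hsm
    rcases le_total N N₂ with h | h
    · exact le_trans (hSmall N h1 h s hsm) (le_max_left _ _)
    · exact le_trans (hBig N h s hsm) (le_max_right _ _)
  have hB0 : 0 ≤ B :=
    le_trans (l1_nonneg (A 1 0)) (by
      have := hB 1 le_rfl 0 ⟨le_rfl, hT.le⟩
      simpa using this)
  set C := 2 * L * B with hCdef
  have hC0 : 0 ≤ C := by positivity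
  have main : ∀ N : ℕ, 1 ≤ N → ∀ t : ℝ, 0 ≤ t → t ≤ T → ∀ n : Fin r → ℕ, ∑ i, n i = N →
      |(N : ℝ) * (SOp N (1 + ((N : ℝ))⁻¹ • A N ((⌊(N : ℝ) * t⌋₊ : ℝ) / N)) f n
        - f fun i => (n i : ℝ) / N)| ≤ C := by
    intro N hN t ht htT n hn
    have hNpos : (0 : ℝ) < N := by exact_mod_cast hN
    set a := A N ((⌊(N : ℝ) * t⌋₊ : ℝ) / N) with ha
    set P := (1 : Matrix (Fin r) (Fin r) ℝ) + ((N : ℝ))⁻¹ • a with hPdef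
    have hPs : IsStochastic P := hstoch N hN ⌊(N : ℝ) * t⌋₊
    have hest := sop_est N hN P hPs f L hL0 hLip n hn
    have hdiag : ∀ i, (1 : ℝ) - P i i = -(a i i) / N := by
      intro i
      rw [hPdef]
      simp only [Matrix.add_apply, Matrix.one_apply_eq, Matrix.smul_apply, smul_eq_mul]
      ring
    have hsum : ∑ i, (n i : ℝ) * (1 - P i i) ≤ l1 a := by
      refine le_trans (le_trans (Finset.sum_le_sum fun i (_ : i ∈ Finset.univ) => ?_)
        (le_refl (∑ i, |a i i|))) (diag_le_l1 a)
      rw [hdiag i]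
      have h1 : (n i : ℝ) ≤ N := by
        exact_mod_cast hn ▸ Finset.single_le_sum (f := n) (fun _ _ => Nat.zero_le _)
          (Finset.mem_univ i)
      have h0 : (0 : ℝ) ≤ (n i : ℝ) := Nat.cast_nonneg _
      have h2 : -(a i i) ≤ |a i i| := neg_le_abs _
      have e : (n i : ℝ) * (-(a i i) / N) = (n i : ℝ) * (-(a i i)) / N := by ring
      rw [e, div_le_iff₀ hNpos]
      nlinarith [abs_nonneg (a i i)]
    have hgrid : ((⌊(N : ℝ) * t⌋₊ : ℝ) / N) ∈ Set.Icc (0 : ℝ) T := by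
      constructor
      · positivity
      · rw [div_le_iff₀ hNpos]
        calc ((⌊(N : ℝ) * t⌋₊ : ℝ)) ≤ (N : ℝ) * t := Nat.floor_le (by positivity)
          _ ≤ (N : ℝ) * T := by nlinarith
          _ = T * N := mul_comm _ _
    have hla : l1 a ≤ B := hB N hN _ hgrid
    rw [abs_mul, abs_of_pos hNpos]
    calc (N : ℝ) * |SOp N P f n - f fun i => (n i : ℝ) / N|
        ≤ (N : ℝ) * (2 * L / N * ∑ i, (n i : ℝ) * (1 - P i i)) :=
          mul_le_mul_of_nonneg_left hest hNpos.le
      _ = 2 * L * ∑ i, (n i : ℝ) * (1 - P i i) := by field_simp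
      _ ≤ 2 * L * B :=
          mul_le_mul_of_nonneg_left (le_trans hsum hla) (by linarith)
  refine ⟨⟨C, main⟩, ?_⟩
  intro ε hε
  refine ⟨⌊C / ε⌋₊ + 1, fun N hN0 hN1 t ht htT n hn => ?_⟩
  have hNpos : (0 : ℝ) < N := by exact_mod_cast hN1
  have h1 := main N hN1 t ht htT n hn
  rw [abs_mul, abs_of_pos hNpos] at h1
  have h2 : |SOp N (1 + ((N : ℝ))⁻¹ • A N ((⌊(N : ℝ) * t⌋₊ : ℝ) / N)) f n
      - f (fun i => (n i : ℝ) / N)| ≤ C / N := by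
    rw [le_div_iff₀ hNpos]
    calc |SOp N (1 + ((N : ℝ))⁻¹ • A N ((⌊(N : ℝ) * t⌋₊ : ℝ) / N)) f n
        - f (fun i => (n i : ℝ) / N)| * N
        = (N : ℝ) * |SOp N (1 + ((N : ℝ))⁻¹ • A N ((⌊(N : ℝ) * t⌋₊ : ℝ) / N)) f n
          - f fun i => (n i : ℝ) / N| := mul_comm _ _
      _ ≤ C := h1
  have h3 : C / N < ε := by
    rw [div_lt_iff₀ hNpos]
    have hlt : C / ε < (N : ℝ) := by
      have hfl : C / ε < (⌊C / ε⌋₊ : ℝ) + 1 := Nat.lt_floor_add_one _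
      have : ((⌊C / ε⌋₊ + 1 : ℕ) : ℝ) ≤ (N : ℝ) := by exact_mod_cast hN0
      push_cast at this
      linarith
    calc C = (C / ε) * ε := by field_simp
      _ < (N : ℝ) * ε := mul_lt_mul_of_pos_right hlt hε
      _ = ε * (N : ℝ) := mul_comm _ _
  linarith
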